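/- Log-linear error property for the slip system: if ξ(t) solves ξ̇ = Aξ with A = [[0,0,0,0],[g^,0,0,0],[0,I,0,0],[0,0,0,−αI]], and η(t) = exp(ξ(t)^∧) where ^∧ : ℝ¹² → se₃(3) is the Lie algebra isomorphism, then η(t) solves the nonlinear invariant error equation dη/dt = f(η) − ηf(I) for the deterministic IMU-slip dynamics f defined on SE₃(3). -/

import Mathlib

open Matrix
attribute [local instance] Matrix.normedAddCommGroup Matrix.normedSpace
noncomputable def skew (w : Fin 3 → ℝ) : Matrix (Fin 3) (Fin 3) ℝ :=
  !![0, -w 2, w 1; w 2, 0, -w 0; -w 1, w 0, 0]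
noncomputable def cols3 (v p u : Fin 3 → ℝ) : Matrix (Fin 3) (Fin 3) ℝ :=
  Matrix.of fun i j => ![v, p, u] j i
/-- The hat map `ℝ¹² → se₃(3)`. -/
noncomputable def hat (ξ : (Fin 3 ⊕ Fin 3) ⊕ (Fin 3 ⊕ Fin 3) → ℝ) :
    Matrix (Fin 3 ⊕ Fin 3) (Fin 3 ⊕ Fin 3) ℝ :=
  Matrix.fromBlocks (skew fun i => ξ (Sum.inl (Sum.inl i)))
    (cols3 (fun i => ξ (Sum.inl (Sum.inr i))) (fun i => ξ (Sum.inr (Sum.inl i)))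
      (fun i => ξ (Sum.inr (Sum.inr i)))) 0 0
def Rof (X : Matrix (Fin 3 ⊕ Fin 3) (Fin 3 ⊕ Fin 3) ℝ) : Matrix (Fin 3) (Fin 3) ℝ :=
  fun i j => X (Sum.inl i) (Sum.inl j)
def vof (X : Matrix (Fin 3 ⊕ Fin 3) (Fin 3 ⊕ Fin 3) ℝ) : Fin 3 → ℝ :=
  fun i => X (Sum.inl i) (Sum.inr 0)
def uof (X : Matrix (Fin 3 ⊕ Fin 3) (Fin 3 ⊕ Fin 3) ℝ) : Fin 3 → ℝ :=
  fun i => X (Sum.inl i) (Sum.inr 2)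
/-- The deterministic IMU–slip dynamics `f(X) = [[Rω̂, Ra+g, v, −αu],[0]]`. -/
noncomputable def fimu (ω a g : Fin 3 → ℝ) (α : ℝ)
    (X : Matrix (Fin 3 ⊕ Fin 3) (Fin 3 ⊕ Fin 3) ℝ) :
    Matrix (Fin 3 ⊕ Fin 3) (Fin 3 ⊕ Fin 3) ℝ :=
  Matrix.fromBlocks (Rof X * skew ω)
    (cols3 (Rof X *ᵥ a + g) (vof X) ((-α) • uof X)) 0 0
/-- The linearized error dynamics matrix `A`. -/
noncomputable def Amat (g : Fin 3 → ℝ) (α : ℝ) :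
    Matrix ((Fin 3 ⊕ Fin 3) ⊕ (Fin 3 ⊕ Fin 3)) ((Fin 3 ⊕ Fin 3) ⊕ (Fin 3 ⊕ Fin 3)) ℝ :=
  Matrix.fromBlocks (Matrix.fromBlocks 0 0 (skew g) 0) 0
    (Matrix.fromBlocks 0 1 0 0) (Matrix.fromBlocks 0 0 0 ((-α) • 1))

section AuxT10
open NormedSpace
set_option maxHeartbeats 1000000
set_option synthInstance.maxHeartbeats 200000

abbrev M3 := Matrix (Fin 3) (Fin 3) ℝ
abbrev M6 := Matrix (Fin 3 ⊕ Fin 3) (Fin 3 ⊕ Fin 3) ℝ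

noncomputable def phiM (S : M3) : M3 := ∑' n : ℕ, (((n+1).factorial : ℝ))⁻¹ • S ^ n

lemma pow_fromBlocks (S B : M3) (n : ℕ) :
    (fromBlocks S B 0 0 : M6) ^ (n+1) = fromBlocks (S^(n+1)) (S^n * B) 0 0 := by
  induction n with
  | zero => simp
  | succ n ih =>
      rw [pow_succ, ih, fromBlocks_multiply]
      simp [pow_succ]

lemma hphi_summable (S : M3) :
    Summable fun n : ℕ => (((n+1).factorial : ℝ))⁻¹ • S ^ n := by
  letI : NormedAddCommGroup M3 := Matrix.linftyOpNormedAddCommGroup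
  letI : NormedSpace ℝ M3 := Matrix.linftyOpNormedSpace
  haveI : CompleteSpace M3 := FiniteDimensional.complete ℝ M3
  letI : SeminormedRing M3 := Matrix.linftyOpSemiNormedRing
  letI : NormedRing M3 := Matrix.linftyOpNormedRing
  letI : NormedAlgebra ℝ M3 := Matrix.linftyOpNormedAlgebra
  letI : NormedSpace ℝ M3 := NormedAlgebra.toNormedSpace M3
  refine Summable.of_norm_bounded (norm_expSeries_summable' (𝕂 := ℝ) S) fun n => ?_
  rw [norm_smul, norm_smul]
  gcongr
  rw [norm_inv, norm_inv, Real.norm_natCast, Real.norm_natCast]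
  have h1 : (0:ℝ) < n.factorial := by exact_mod_cast n.factorial_pos
  have h2 : (n.factorial:ℝ) ≤ ((n+1).factorial :ℝ) := by
    exact_mod_cast Nat.factorial_le (Nat.le_succ n)
  exact inv_anti₀ h1 h2

lemma tsum_fromBlocks {f g : ℕ → M3} (hf : Summable f) (hg : Summable g) :
    ∑' n, (fromBlocks (f n) (g n) 0 0 : M6) = fromBlocks (∑' n, f n) (∑' n, g n) 0 0 := by
  let T : (M3 × M3) →ₗ[ℝ] M6 :=
    { toFun := fun P => fromBlocks P.1 P.2 0 0
      map_add' := by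
        intro x y
        show fromBlocks (x.1 + y.1) (x.2 + y.2) 0 0 = _
        rw [fromBlocks_add]
        simp
      map_smul' := by
        intro c x
        show fromBlocks (c • x.1) (c • x.2) 0 0 = c • fromBlocks x.1 x.2 0 0
        rw [fromBlocks_smul]
        simp }
  let Tc : (M3 × M3) →L[ℝ] M6 := ⟨T, T.continuous_of_finiteDimensional⟩
  have hfg : Summable fun n => (f n, g n) := ⟨_, (hf.hasSum.prodMk hg.hasSum)⟩
  have h1 : ∑' n, (fromBlocks (f n) (g n) 0 0 : M6) = Tc (∑' n, (f n, g n)) :=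
    (Tc.map_tsum hfg).symm
  have h2 : (∑' n, (f n, g n)) = (∑' n, f n, ∑' n, g n) :=
    (hf.hasSum.prodMk hg.hasSum).tsum_eq
  rw [h1, h2]
  rfl

lemma exp_tsum' (S : M3) : exp S = ∑' n : ℕ, ((n.factorial : ℝ))⁻¹ • S ^ n := by
  rw [exp_eq_tsum ℝ]

lemma exp_shift (S : M3) :
    ∑' n : ℕ, (((n+1).factorial : ℝ))⁻¹ • S ^ (n+1) = exp S - 1 := by
  letI : NormedAddCommGroup M3 := Matrix.linftyOpNormedAddCommGroup
  letI : NormedSpace ℝ M3 := Matrix.linftyOpNormedSpace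
  haveI : CompleteSpace M3 := FiniteDimensional.complete ℝ M3
  letI : SeminormedRing M3 := Matrix.linftyOpSemiNormedRing
  letI : NormedRing M3 := Matrix.linftyOpNormedRing
  letI : NormedAlgebra ℝ M3 := Matrix.linftyOpNormedAlgebra
  have hS : Summable fun n : ℕ => ((n.factorial : ℝ))⁻¹ • S ^ n := expSeries_summable' S
  rw [exp_tsum', Summable.tsum_eq_zero_add hS]
  simp

lemma phiM_mul (S : M3) : phiM S * S = exp S - 1 := by
  letI : SeminormedRing M3 := Matrix.linftyOpSemiNormedRing
  letI : NormedRing M3 := Matrix.linftyOpNormedRing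
  letI : NormedAlgebra ℝ M3 := Matrix.linftyOpNormedAlgebra
  rw [phiM, ← (hphi_summable S).tsum_mul_right S, ← exp_shift S]
  congr 1
  funext n
  rw [smul_mul_assoc, ← pow_succ]

lemma exp_fromBlocks (S B : M3) :
    exp (fromBlocks S B 0 0 : M6) = fromBlocks (exp S) (phiM S * B) 0 1 := by
  letI : NormedAddCommGroup M6 := Matrix.linftyOpNormedAddCommGroup
  letI : NormedSpace ℝ M6 := Matrix.linftyOpNormedSpace
  haveI : CompleteSpace M6 := FiniteDimensional.complete ℝ M6
  letI : SeminormedRing M6 := Matrix.linftyOpSemiNormedRing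
  letI : NormedRing M6 := Matrix.linftyOpNormedRing
  letI : NormedAlgebra ℝ M6 := Matrix.linftyOpNormedAlgebra
  letI : NormedAddCommGroup M3 := Matrix.linftyOpNormedAddCommGroup
  letI : NormedSpace ℝ M3 := Matrix.linftyOpNormedSpace
  haveI : CompleteSpace M3 := FiniteDimensional.complete ℝ M3
  letI : SeminormedRing M3 := Matrix.linftyOpSemiNormedRing
  letI : NormedRing M3 := Matrix.linftyOpNormedRing
  letI : NormedAlgebra ℝ M3 := Matrix.linftyOpNormedAlgebra
  have hS : Summable fun n : ℕ => ((n.factorial : ℝ))⁻¹ • S ^ n := expSeries_summable' (𝕂 := ℝ) S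
  have hN : Summable fun n : ℕ => ((n.factorial : ℝ))⁻¹ • (fromBlocks S B 0 0 : M6) ^ n :=
    expSeries_summable' (𝕂 := ℝ) _
  have h1 : Summable fun n : ℕ => (((n+1).factorial : ℝ))⁻¹ • S ^ (n+1) :=
    (summable_nat_add_iff 1).mpr hS
  have h2 : Summable fun n : ℕ => (((n+1).factorial : ℝ))⁻¹ • (S ^ n * B) := by
    have := (hphi_summable S).mul_right B
    simpa [smul_mul_assoc] using this
  have hexp6 : exp (fromBlocks S B 0 0 : M6)
      = ∑' n : ℕ, ((n.factorial : ℝ))⁻¹ • (fromBlocks S B 0 0 : M6) ^ n := by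
    rw [exp_eq_tsum ℝ]
  rw [hexp6, Summable.tsum_eq_zero_add hN]
  have hshift : (fun n : ℕ => (((n+1).factorial : ℝ))⁻¹ • (fromBlocks S B 0 0 : M6) ^ (n+1))
      = fun n : ℕ => (fromBlocks ((((n+1).factorial : ℝ))⁻¹ • S ^ (n+1))
          ((((n+1).factorial : ℝ))⁻¹ • (S ^ n * B)) 0 0 : M6) := by
    funext n
    rw [pow_fromBlocks, fromBlocks_smul]
    simp
  rw [hshift, tsum_fromBlocks h1 h2, exp_shift S]
  have hphi : ∑' n : ℕ, (((n+1).factorial : ℝ))⁻¹ • (S ^ n * B) = phiM S * B := by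
    rw [phiM, ← (hphi_summable S).tsum_mul_right B]
    congr 1
    funext n
    rw [smul_mul_assoc]
  rw [hphi]
  simp only [pow_zero, Nat.factorial_zero, Nat.cast_one, inv_one, one_smul]
  rw [show (1 : M6) = fromBlocks 1 0 0 1 from (fromBlocks_one).symm, fromBlocks_add]
  simp

lemma mul_cols3 (M : M3) (x y z : Fin 3 → ℝ) :
    M * cols3 x y z = cols3 (M *ᵥ x) (M *ᵥ y) (M *ᵥ z) := by
  ext i j
  fin_cases j <;>
    simp [cols3, mul_apply, mulVec, dotProduct]

lemma skew_cross (g w : Fin 3 → ℝ) : skew g *ᵥ w = -(skew w *ᵥ g) := by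
  funext i
  fin_cases i <;>
    simp [skew, mulVec, dotProduct, Fin.sum_univ_three] <;> ring

lemma cols3_add' (x y z x' y' z' : Fin 3 → ℝ) :
    cols3 (fun i => x i + x' i) (fun i => y i + y' i) (fun i => z i + z' i)
      = cols3 x y z + cols3 x' y' z' := by
  ext i j
  fin_cases j <;> simp [cols3]

lemma cols3_smul' (c : ℝ) (x y z : Fin 3 → ℝ) :
    cols3 (fun i => c * x i) (fun i => c * y i) (fun i => c * z i) = c • cols3 x y z := by
  ext i j
  fin_cases j <;> simp [cols3]

lemma cols3_sub (x y z x' y' z' : Fin 3 → ℝ) :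
    cols3 x y z - cols3 x' y' z' = cols3 (x - x') (y - y') (z - z') := by
  ext i j
  fin_cases j <;> simp [cols3]

lemma Rof_fromBlocks (A B C D : M3) : Rof (fromBlocks A B C D) = A := by
  ext i j; simp [Rof, fromBlocks]

lemma vof_fromBlocks (A : M3) (x y z : Fin 3 → ℝ) (C D : M3) :
    vof (fromBlocks A (cols3 x y z) C D) = x := by
  funext i; simp [vof, fromBlocks, cols3]

lemma uof_fromBlocks (A : M3) (x y z : Fin 3 → ℝ) (C D : M3) :
    uof (fromBlocks A (cols3 x y z) C D) = z := by
  funext i; simp [uof, fromBlocks, cols3]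

lemma Rof_one : Rof 1 = 1 := by
  ext i j; simp [Rof, one_apply, Sum.inl.injEq]

lemma vof_one : vof 1 = 0 := by
  funext i; simp [vof, one_apply]

lemma uof_one : uof 1 = 0 := by
  funext i; simp [uof, one_apply]

lemma fromBlocks_sub' (A B A' B' : M3) :
    (fromBlocks A B 0 0 : M6) - fromBlocks A' B' 0 0 = fromBlocks (A - A') (B - B') 0 0 := by
  ext i j
  rcases i with i | i <;> rcases j with j | j <;> simp [fromBlocks]

theorem t10 (ω a g : Fin 3 → ℝ) (α : ℝ)
    (ξ : ℝ → ((Fin 3 ⊕ Fin 3) ⊕ (Fin 3 ⊕ Fin 3) → ℝ))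
    (hξ : ∀ t, HasDerivAt ξ (Amat g α *ᵥ ξ t) t) :
    ∀ t, HasDerivAt (fun s => NormedSpace.exp (hat (ξ s)))
      (fimu ω a g α (NormedSpace.exp (hat (ξ t))) -
        NormedSpace.exp (hat (ξ t)) * fimu ω a g α 1) t := by
  intro t
  have hw : ∀ s i, ξ s (Sum.inl (Sum.inl i)) = ξ 0 (Sum.inl (Sum.inl i)) := by
    intro s i
    have hdiff : Differentiable ℝ (fun r => ξ r (Sum.inl (Sum.inl i))) := fun r =>
      ((hasDerivAt_pi.mp (hξ r)) (Sum.inl (Sum.inl i))).differentiableAt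
    have hderiv : ∀ r, deriv (fun r => ξ r (Sum.inl (Sum.inl i))) r = 0 := by
      intro r
      have h := (hasDerivAt_pi.mp (hξ r)) (Sum.inl (Sum.inl i))
      have hz : (Amat g α *ᵥ ξ r) (Sum.inl (Sum.inl i)) = 0 := by
        simp [Amat, fromBlocks_mulVec]
      rw [h.deriv, hz]
    exact is_const_of_deriv_eq_zero hdiff hderiv s 0
  set w0 : Fin 3 → ℝ := fun i => ξ 0 (Sum.inl (Sum.inl i)) with hw0
  have hhat : ∀ s, hat (ξ s) = fromBlocks (skew w0)
      (cols3 (fun i => ξ s (Sum.inl (Sum.inr i))) (fun i => ξ s (Sum.inr (Sum.inl i)))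
        (fun i => ξ s (Sum.inr (Sum.inr i)))) 0 0 := by
    intro s
    unfold hat
    rw [show (fun i => ξ s (Sum.inl (Sum.inl i))) = w0 from funext fun i => hw s i]
  have hexps : ∀ s, NormedSpace.exp (hat (ξ s)) = fromBlocks (exp (skew w0))
      (phiM (skew w0) * cols3 (fun i => ξ s (Sum.inl (Sum.inr i))) (fun i => ξ s (Sum.inr (Sum.inl i)))
        (fun i => ξ s (Sum.inr (Sum.inr i)))) 0 1 := by
    intro s
    rw [hhat s, exp_fromBlocks]
  -- the continuous linear map
  let Lfun : (((Fin 3 ⊕ Fin 3) ⊕ (Fin 3 ⊕ Fin 3)) → ℝ) →ₗ[ℝ] M6 :=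
    { toFun := fun x => fromBlocks 0 (phiM (skew w0) * cols3 (fun i => x (Sum.inl (Sum.inr i)))
        (fun i => x (Sum.inr (Sum.inl i))) (fun i => x (Sum.inr (Sum.inr i)))) 0 0
      map_add' := by
        intro x y
        show fromBlocks 0 (phiM (skew w0) * cols3 _ _ _) 0 0 = _
        simp only [Pi.add_apply]
        rw [cols3_add', mul_add, fromBlocks_add]
        simp
      map_smul' := by
        intro c x
        show fromBlocks 0 (phiM (skew w0) * cols3 _ _ _) 0 0 = _
        simp only [Pi.smul_apply, smul_eq_mul, RingHom.id_apply]
        rw [cols3_smul', Matrix.mul_smul, fromBlocks_smul]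
        simp }
  let Lc : (((Fin 3 ⊕ Fin 3) ⊕ (Fin 3 ⊕ Fin 3)) → ℝ) →L[ℝ] M6 :=
    ⟨Lfun, Lfun.continuous_of_finiteDimensional⟩
  have hrepr : ∀ s, NormedSpace.exp (hat (ξ s)) = fromBlocks (exp (skew w0)) 0 0 1 + Lc (ξ s) := by
    intro s
    rw [hexps s]
    show _ = _ + fromBlocks 0 (phiM (skew w0) * cols3 _ _ _) 0 0
    rw [fromBlocks_add]
    simp
  have hder : HasDerivAt (fun s => NormedSpace.exp (hat (ξ s))) (Lc (Amat g α *ᵥ ξ t)) t := by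
    have h1 : HasDerivAt (fun s => fromBlocks (exp (skew w0)) 0 0 1 + Lc (ξ s))
        (Lc (Amat g α *ᵥ ξ t)) t :=
      (Lc.hasFDerivAt.comp_hasDerivAt t (hξ t)).const_add _
    have h2 : (fun s => NormedSpace.exp (hat (ξ s)))
        = fun s => fromBlocks (exp (skew w0)) 0 0 1 + Lc (ξ s) :=
      funext hrepr
    rw [h2]
    exact h1
  -- components of A ξ
  have hAv : (fun i => (Amat g α *ᵥ ξ t) (Sum.inl (Sum.inr i))) = skew g *ᵥ w0 := by
    funext i
    simp only [Amat, fromBlocks_mulVec, Sum.elim_inl, Sum.elim_inr, Pi.add_apply,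
      Matrix.zero_mulVec, Pi.zero_apply, add_zero, zero_add]
    congr 1
    funext k
    exact hw t k
  have hAp : (fun i => (Amat g α *ᵥ ξ t) (Sum.inr (Sum.inl i)))
      = fun i => ξ t (Sum.inl (Sum.inr i)) := by
    funext i
    simp only [Amat, fromBlocks_mulVec, Sum.elim_inl, Sum.elim_inr, Pi.add_apply,
      Matrix.zero_mulVec, Pi.zero_apply, add_zero, zero_add, Matrix.one_mulVec, Function.comp]
  have hAu : (fun i => (Amat g α *ᵥ ξ t) (Sum.inr (Sum.inr i)))
      = fun i => -α * ξ t (Sum.inr (Sum.inr i)) := by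
    funext i
    simp only [Amat, fromBlocks_mulVec, Sum.elim_inl, Sum.elim_inr, Pi.add_apply,
      Matrix.zero_mulVec, Pi.zero_apply, add_zero, zero_add, Matrix.smul_mulVec,
      Matrix.one_mulVec, Pi.smul_apply, smul_eq_mul, Function.comp]
  set vt : Fin 3 → ℝ := fun i => ξ t (Sum.inl (Sum.inr i)) with hvt
  set pt : Fin 3 → ℝ := fun i => ξ t (Sum.inr (Sum.inl i)) with hpt
  set ut : Fin 3 → ℝ := fun i => ξ t (Sum.inr (Sum.inr i)) with hut
  have hfinal : Lc (Amat g α *ᵥ ξ t)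
      = fimu ω a g α (NormedSpace.exp (hat (ξ t))) -
        NormedSpace.exp (hat (ξ t)) * fimu ω a g α 1 := by
    rw [hexps t]
    have hL : Lc (Amat g α *ᵥ ξ t)
        = fromBlocks 0 (phiM (skew w0) * cols3 (skew g *ᵥ w0) vt (fun i => -α * ut i)) 0 0 := by
      show fromBlocks 0 (phiM (skew w0) * cols3 _ _ _) 0 0 = _
      rw [hAv, hAp, hAu]
    rw [hL]
    have hfη : fimu ω a g α (fromBlocks (exp (skew w0)) (phiM (skew w0) * cols3 vt pt ut) 0 1)
        = fromBlocks (exp (skew w0) * skew ω) (cols3 (exp (skew w0) *ᵥ a + g)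
            (phiM (skew w0) *ᵥ vt) ((-α) • (phiM (skew w0) *ᵥ ut))) 0 0 := by
      unfold fimu
      rw [mul_cols3, Rof_fromBlocks, vof_fromBlocks, uof_fromBlocks]
    have hf1 : fimu ω a g α 1 = fromBlocks (skew ω) (cols3 (a + g) 0 0) 0 0 := by
      unfold fimu
      rw [Rof_one, vof_one, uof_one]
      simp
    have e1 : phiM (skew w0) *ᵥ (skew g *ᵥ w0)
        = exp (skew w0) *ᵥ a + g - exp (skew w0) *ᵥ (a + g) := by
      rw [skew_cross g w0, Matrix.mulVec_neg, Matrix.mulVec_mulVec, phiM_mul,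
        Matrix.sub_mulVec, Matrix.one_mulVec, Matrix.mulVec_add]
      abel
    have e3 : phiM (skew w0) *ᵥ (fun i => -α * ut i) = (-α) • (phiM (skew w0) *ᵥ ut) := by
      rw [show (fun i => -α * ut i) = (-α) • ut from rfl, Matrix.mulVec_smul]
    rw [hfη, hf1, fromBlocks_multiply]
    simp only [Matrix.mul_zero, Matrix.zero_mul, add_zero, zero_add, Matrix.mul_one,
      Matrix.one_mul]
    rw [mul_cols3, fromBlocks_sub', mul_cols3, Matrix.mulVec_zero, cols3_sub]
    simp only [sub_self, sub_zero]
    rw [e1, e3]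
  rw [← hfinal]
  exact hder

end AuxT10
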